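/- For every integer n ≥ 3, the set {x ∈ [1, n−2] : n^{2x/(n−1)}·(n − x) − n·(x + 1) = 0} equals {(n−1)/2}. -/

import Mathlib

open Real Set

private lemma nat_pow_ineq (n : ℕ) (hn : 7 ≤ n) : n^2 ≤ 2^(n-1) := by
  induction n, hn using Nat.le_induction with
  | base => norm_num
  | succ n hn ih =>
    have h1 : (n+1)^2 ≤ 2 * n^2 := by nlinarith
    have h2 : 2 * n^2 ≤ 2 * 2^(n-1) := by omega
    have h3 : 2 * 2^(n-1) = 2^(n+1-1) := by
      rw [← pow_succ']; congr 1; omega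
    omega

private lemma rpow_ineq (n : ℕ) (hn : 4 ≤ n) :
    ((n:ℝ))^2 < (2*(n:ℝ)/((n:ℝ)-1))^(n-1) := by
  rcases lt_or_ge n 7 with h7 | h7
  · interval_cases n <;> norm_num
  · have hN : (7:ℝ) ≤ (n:ℝ) := by exact_mod_cast h7
    have h1 : ((n:ℝ))^2 ≤ 2^(n-1) := by
      calc ((n:ℝ))^2 = ((n^2 : ℕ):ℝ) := by push_cast; ring
      _ ≤ ((2^(n-1) : ℕ):ℝ) := by exact_mod_cast nat_pow_ineq n h7
      _ = 2^(n-1) := by push_cast; ring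
    have hb : (2:ℝ) < 2*(n:ℝ)/((n:ℝ)-1) := by
      rw [lt_div_iff₀ (by linarith)]; linarith
    have h2 : (2:ℝ)^(n-1) < (2*(n:ℝ)/((n:ℝ)-1))^(n-1) :=
      pow_lt_pow_left₀ hb (by norm_num) (by omega)
    linarith

set_option maxHeartbeats 1000000 in
private lemma forward_aux (n : ℕ) (hn : 4 ≤ n) (x : ℝ)
    (hx1 : 1 ≤ x) (hx2 : x ≤ (n:ℝ) - 2)
    (heq : (n:ℝ) ^ (2 * x / ((n:ℝ) - 1)) * ((n:ℝ) - x) - (n:ℝ) * (x + 1) = 0) :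
    x = ((n:ℝ) - 1) / 2 := by
  set N : ℝ := (n:ℝ) with hNdef
  have hN4 : (4:ℝ) ≤ N := by rw [hNdef]; exact_mod_cast hn
  set m : ℝ := (N - 1) / 2 with hmdef
  have hm1 : 1 < m := by rw [hmdef]; linarith
  set c : ℝ := 2 * Real.log N / (N - 1) with hcdef
  set h : ℝ → ℝ := fun t => c * t + Real.log (N - t) - Real.log (t + 1) - Real.log N
    with hhdef
  have hN1 : N - 1 ≠ 0 := by linarith
  have hNpos : (0:ℝ) < N := by linarith
  -- the equation gives h x = 0
  have hx0 : h x = 0 := by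
    have hpos1 : (0:ℝ) < N - x := by linarith
    have hpos2 : (0:ℝ) < x + 1 := by linarith
    have heq' : N ^ (2 * x / (N - 1)) * (N - x) = N * (x + 1) := by linarith
    have hlog := congrArg Real.log heq'
    rw [Real.log_mul (ne_of_gt (Real.rpow_pos_of_pos hNpos _)) (ne_of_gt hpos1),
        Real.log_mul (ne_of_gt hNpos) (ne_of_gt hpos2),
        Real.log_rpow hNpos] at hlog
    have hceq : c * x = 2 * x / (N - 1) * Real.log N := by
      rw [hcdef]; ring
    simp only [hhdef]
    rw [hceq]; linarith
  -- h m = 0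
  have hm0 : h m = 0 := by
    have e1 : N - m = m + 1 := by rw [hmdef]; ring
    have e2 : c * m = Real.log N := by
      rw [hcdef, hmdef]; field_simp
    simp only [hhdef]
    rw [e1, e2]; ring
  -- h 1 < 0
  have h1neg : h 1 < 0 := by
    have key0 := rpow_ineq n hn
    have hNn1 : ((n - 1 : ℕ) : ℝ) = N - 1 := by
      rw [hNdef]; push_cast [Nat.cast_sub (by omega : 1 ≤ n)]; ring
    have key1 : Real.log (N^2) < Real.log ((2*N/(N-1))^(n-1)) :=
      Real.log_lt_log (pow_pos hNpos 2) key0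
    rw [Real.log_pow, Real.log_pow, hNn1] at key1
    have hlogb : Real.log (2*N/(N-1)) = Real.log 2 + Real.log N - Real.log (N-1) := by
      rw [Real.log_div (ne_of_gt (by linarith : (0:ℝ) < 2*N)) hN1,
          Real.log_mul (by norm_num) (ne_of_gt hNpos)]
    rw [hlogb] at key1
    have key2 : 2 * Real.log N < (N-1) * (Real.log 2 + Real.log N - Real.log (N-1)) := by
      push_cast at key1; linarith
    have hclt : c < Real.log 2 + Real.log N - Real.log (N-1) := by
      rw [hcdef, div_lt_iff₀ (by linarith : (0:ℝ) < N - 1)]; linarith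
    simp only [hhdef]
    have e : (1:ℝ) + 1 = 2 := by norm_num
    rw [mul_one, e]
    linarith
  -- strict convexity of h on [1, m]
  have hconv : StrictConvexOn ℝ (Icc 1 m) h := by
    apply StrictMonoOn.strictConvexOn_of_deriv (convex_Icc _ _)
    · apply ContinuousOn.sub
      apply ContinuousOn.sub
      apply ContinuousOn.add
      · exact (continuous_const.mul continuous_id).continuousOn
      · apply ContinuousOn.log ((continuous_const.sub continuous_id).continuousOn)
        intro t ht
        have htm : t ≤ m := ht.2
        have hmN : m < N := by rw [hmdef]; linarith
        exact ne_of_gt (by linarith : (0:ℝ) < N - t)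
      · apply ContinuousOn.log ((continuous_id.add continuous_const).continuousOn)
        intro t ht
        have := ht.1
        exact ne_of_gt (by linarith : (0:ℝ) < t + 1)
      · exact continuousOn_const
    · rw [interior_Icc]
      have hderiv : ∀ t ∈ Ioo (1:ℝ) m, deriv h t = c - 1/(N-t) - 1/(t+1) := by
        intro t ht
        have ht1 : (0:ℝ) < N - t := by
          have := ht.2; rw [hmdef] at this; linarith
        have ht2 : (0:ℝ) < t + 1 := by have := ht.1; linarith
        have d1 : HasDerivAt (fun s : ℝ => c * s) c t := by
          simpa using (hasDerivAt_id t).const_mul c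
        have d2 : HasDerivAt (fun s : ℝ => Real.log (N - s)) (-1/(N-t)) t := by
          have : HasDerivAt (fun s : ℝ => N - s) (-1) t := by
            simpa using (hasDerivAt_id t).const_sub N
          simpa using this.log (ne_of_gt ht1)
        have d3 : HasDerivAt (fun s : ℝ => Real.log (s + 1)) (1/(t+1)) t := by
          have : HasDerivAt (fun s : ℝ => s + 1) 1 t := by
            simpa using (hasDerivAt_id t).add_const 1
          simpa using this.log (ne_of_gt ht2)
        have : HasDerivAt h (c + (-1/(N-t)) - 1/(t+1) - 0) t := by
          exact (((d1.add d2).sub d3).sub (hasDerivAt_const t (Real.log N)))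
        have := this.deriv
        rw [this]; ring
      intro a ha b hb hab
      rw [hderiv a ha, hderiv b hb]
      have ha1 : (1:ℝ) < a := ha.1
      have ham : a < m := ha.2
      have hb1 : (1:ℝ) < b := hb.1
      have hbm : b < m := hb.2
      have hNa : (0:ℝ) < N - a := by rw [hmdef] at ham; linarith
      have hNb : (0:ℝ) < N - b := by rw [hmdef] at hbm; linarith
      have hap : (0:ℝ) < a + 1 := by linarith
      have hbp : (0:ℝ) < b + 1 := by linarith
      have key : 1/(N-b) + 1/(b+1) < 1/(N-a) + 1/(a+1) := by
        rw [div_add_div _ _ (ne_of_gt hNb) (ne_of_gt hbp),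
            div_add_div _ _ (ne_of_gt hNa) (ne_of_gt hap),
            div_lt_div_iff₀ (by positivity) (by positivity)]
        rw [hmdef] at ham hbm
        nlinarith [mul_pos (sub_pos.2 hab) (by linarith : (0:ℝ) < N - 1 - a - b)]
      linarith
  -- h is negative on [1, m)
  have hneg : ∀ y : ℝ, 1 ≤ y → y < m → h y < 0 := by
    intro y hy1 hym
    rcases eq_or_lt_of_le hy1 with rfl | hy1'
    · exact h1neg
    · have hm1' : (0:ℝ) < m - 1 := by linarith
      set a : ℝ := (m - y)/(m - 1) with hadef
      set b : ℝ := (y - 1)/(m - 1) with hbdef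
      have hapos : 0 < a := by apply div_pos <;> linarith
      have hbpos : 0 < b := by apply div_pos <;> linarith
      have hab : a + b = 1 := by rw [hadef, hbdef]; field_simp; ring
      have hcomb : a • (1:ℝ) + b • m = y := by
        simp only [smul_eq_mul, hadef, hbdef]; field_simp; ring
      have := hconv.2 (left_mem_Icc.2 (le_of_lt hm1)) (right_mem_Icc.2 (le_of_lt hm1))
        (by linarith : (1:ℝ) ≠ m) hapos hbpos hab
      rw [hcomb] at this
      simp only [smul_eq_mul] at this
      rw [hm0] at this
      nlinarith
  -- conclude
  rcases lt_trichotomy x m with hlt | heqm | hgt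
  · exact absurd hx0 (ne_of_lt (hneg x hx1 hlt))
  · exact heqm
  · exfalso
    set y : ℝ := N - 1 - x with hydef
    have hy1 : 1 ≤ y := by rw [hydef]; linarith
    have hym : y < m := by rw [hydef, hmdef]; rw [hmdef] at hgt; linarith
    have hsym : h y = - h x := by
      have e1 : N - y = x + 1 := by rw [hydef]; ring
      have e2 : y + 1 = N - x := by rw [hydef]; ring
      have e3 : c * (N - 1) = 2 * Real.log N := by
        rw [hcdef]; field_simp
      simp only [hhdef]
      rw [e1, e2]
      have : c * y = c * (N-1) - c * x := by rw [hydef]; ring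
      rw [this, e3]; ring
    have := hneg y hy1 hym
    rw [hsym, hx0] at this
    linarith

/-- For every integer `n ≥ 3`, the set of `x ∈ [1, n-2]` with
`n^{2x/(n-1)}(n - x) - n(x + 1) = 0` is exactly `{(n-1)/2}`. -/
theorem critical_equation_solution_set (n : ℕ) (hn : 3 ≤ n) :
    {x : ℝ | x ∈ Set.Icc (1 : ℝ) ((n : ℝ) - 2) ∧
        (n : ℝ) ^ (2 * x / ((n : ℝ) - 1)) * ((n : ℝ) - x) - (n : ℝ) * (x + 1) = 0}
      = {((n : ℝ) - 1) / 2} := by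
  have hN3 : (3:ℝ) ≤ (n:ℝ) := by exact_mod_cast hn
  ext x
  simp only [Set.mem_setOf_eq, Set.mem_singleton_iff]
  constructor
  · rintro ⟨⟨hx1, hx2⟩, heq⟩
    rcases eq_or_lt_of_le hn with h3 | h4
    · -- n = 3
      have hn3 : (n:ℝ) = 3 := by exact_mod_cast h3.symm
      rw [hn3] at hx2 ⊢
      norm_num at hx2 ⊢
      linarith
    · exact forward_aux n (by omega) x hx1 hx2 heq
  · rintro rfl
    have h1 : ((n:ℝ) - 1) ≠ 0 := by linarith
    have he : 2 * (((n:ℝ) - 1)/2) / ((n:ℝ) - 1) = 1 := by field_simp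
    refine ⟨⟨by linarith, by linarith⟩, ?_⟩
    rw [he, Real.rpow_one]
    ring
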